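/- Let n ∈ ℕ, t, λ ∈ ℂ, and let p be a monic polynomial of degree n over ℂ satisfying p''(x) + (2x² + t)·p'(x) − 2n·x·p(x) = λ·p(x) for all x ∈ ℂ. Set F(x) := p(x)·exp(θ(x;t)) and suppose that the ray integrals are all equal: I₁(F²) = I₃(F²) = I₅(F²) (equivalently ∫_γ F² dx = 0 and ∫_γ̃ F² dx = 0). Then there exists a polynomial r over ℂ with r''(x) + (2x² + t)·r'(x) − 2n·x·r(x) − λ·r(x) = p(x) for all x ∈ ℂ; that is, λ is a repeated eigenvalue admitting a polynomial generalized eigenvector. -/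

import Mathlib

/-- Direction at infinity of argument kπ/3. -/
noncomputable def rayDir (k : ℕ) : ℂ := Complex.exp ((k : ℂ) * Real.pi * Complex.I / 3)

/-- Ray integral I_k(f) = ω_k · ∫₀^∞ f(r·ω_k) dr. -/
noncomputable def rayIntegral (k : ℕ) (f : ℂ → ℂ) : ℂ :=
  rayDir k * ∫ r in Set.Ioi (0 : ℝ), f ((r : ℂ) * rayDir k)


open MeasureTheory Set Filter Polynomial
open scoped Topology

lemma tendsto_aux (j : ℕ) (c : ℝ) :
    Tendsto (fun r : ℝ => r ^ j * Real.exp (-(2/3) * r ^ 3 + c * r)) atTop (𝓝 0) := by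
  have h1 : Tendsto (fun r : ℝ => r ^ j * Real.exp (-r)) atTop (𝓝 0) :=
    Real.tendsto_pow_mul_exp_neg_atTop_nhds_zero j
  apply squeeze_zero' (g := fun r : ℝ => r ^ j * Real.exp (-r))
  · filter_upwards [eventually_ge_atTop (0:ℝ)] with r hr
    positivity
  · filter_upwards [eventually_ge_atTop (max 1 (Real.sqrt ((3/2) * (c+1))))] with r hr
    have hr1 : (1:ℝ) ≤ r := le_trans (le_max_left _ _) hr
    have hr0 : (0:ℝ) ≤ r := by linarith
    have hrs : Real.sqrt ((3/2)*(c+1)) ≤ r := le_trans (le_max_right _ _) hr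
    have hsq : (3/2)*(c+1) ≤ r^2 := by
      rcases le_or_gt ((3/2)*(c+1)) 0 with h|h
      · nlinarith
      · nlinarith [Real.sq_sqrt h.le, Real.sqrt_nonneg ((3/2)*(c+1)),
          sq_nonneg (r - Real.sqrt ((3/2)*(c+1)))]
    have hexp : -(2/3) * r^3 + c * r ≤ -r := by nlinarith
    have : Real.exp (-(2/3) * r^3 + c*r) ≤ Real.exp (-r) := Real.exp_le_exp.2 hexp
    have hp : (0:ℝ) ≤ r ^ j := by positivity
    exact mul_le_mul_of_nonneg_left this hp
  · exact h1

lemma integrable_aux (j : ℕ) (c : ℝ) :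
    IntegrableOn (fun r : ℝ => r ^ j * Real.exp (-(2/3) * r ^ 3 + c * r)) (Ioi 0) := by
  apply integrable_of_isBigO_exp_neg (a := 0) (b := 1) one_pos
  · exact (Continuous.continuousOn (by continuity))
  · rw [Asymptotics.isBigO_iff]
    refine ⟨1, ?_⟩
    have h2 : ∀ᶠ r : ℝ in atTop, r ^ j * Real.exp (-(2/3) * r^3 + (c+1) * r) ≤ 1 := by
      have h := (tendsto_aux j (c+1)).eventually (eventually_le_nhds (by norm_num : (0:ℝ) < 1))
      exact h
    filter_upwards [h2, eventually_ge_atTop (0:ℝ)] with r hr hr0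
    have hnn : (0:ℝ) ≤ r ^ j * Real.exp (-(2/3)*r^3 + c*r) := by positivity
    rw [Real.norm_eq_abs, Real.norm_eq_abs, _root_.abs_of_nonneg hnn,
      _root_.abs_of_nonneg (Real.exp_pos _).le]
    have : r ^ j * Real.exp (-(2/3) * r^3 + c * r)
        = (r ^ j * Real.exp (-(2/3) * r^3 + (c+1) * r)) * Real.exp (-1 * r) := by
      rw [mul_assoc, ← Real.exp_add]; ring_nf
    rw [this]
    have := Real.exp_pos (-1 * r)
    nlinarith

noncomputable def wexp (τ x : ℂ) : ℂ := Complex.exp (2*x^3/3 + τ*x)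

lemma norm_omega {ω : ℂ} (hω : ω^3 = -1) : ‖ω‖ = 1 := by
  have h : ‖ω‖^3 = 1 := by
    rw [← norm_pow, hω]; simp
  nlinarith [norm_nonneg ω, sq_nonneg (‖ω‖ - 1), sq_nonneg (‖ω‖ + 1)]

lemma wexp_arg {ω : ℂ} (hω : ω^3 = -1) (τ : ℂ) (r : ℝ) :
    2*((r:ℂ)*ω)^3/3 + τ*((r:ℂ)*ω) = ((-(2/3)*r^3 : ℝ) : ℂ) + (r:ℂ) * (τ*ω) := by
  push_cast
  linear_combination (2*(r:ℂ)^3/3) * hω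

lemma norm_ray_integrand {ω : ℂ} (hω : ω^3 = -1) (τ : ℂ) (j : ℕ) {r : ℝ} (hr : 0 ≤ r) :
    ‖((r:ℂ)*ω)^j * wexp τ ((r:ℂ)*ω)‖
      = r^j * Real.exp (-(2/3)*r^3 + (τ*ω).re * r) := by
  rw [norm_mul, norm_pow, norm_mul, Complex.norm_real, Real.norm_eq_abs,
    _root_.abs_of_nonneg hr, norm_omega hω, mul_one]
  congr 1
  rw [wexp, Complex.norm_exp, wexp_arg hω]
  simp [Complex.add_re, Complex.re_ofReal_mul, ← Complex.ofReal_pow]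
  ring

lemma integrable_mono_ray {ω : ℂ} (hω : ω^3 = -1) (τ : ℂ) (j : ℕ) :
    IntegrableOn (fun r : ℝ => ((r:ℂ)*ω)^j * wexp τ ((r:ℂ)*ω)) (Ioi 0) := by
  apply Integrable.mono' (integrable_aux j ((τ*ω).re))
  · apply Continuous.aestronglyMeasurable
    unfold wexp; continuity
  · filter_upwards [ae_restrict_mem measurableSet_Ioi] with r hr
    rw [norm_ray_integrand hω τ j (le_of_lt hr)]

lemma tendsto_mono_ray {ω : ℂ} (hω : ω^3 = -1) (τ : ℂ) (j : ℕ) :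
    Tendsto (fun r : ℝ => ((r:ℂ)*ω)^j * wexp τ ((r:ℂ)*ω)) atTop (𝓝 0) := by
  rw [tendsto_zero_iff_norm_tendsto_zero]
  apply Tendsto.congr' _ (tendsto_aux j ((τ*ω).re))
  filter_upwards [eventually_ge_atTop (0:ℝ)] with r hr
  rw [norm_ray_integrand hω τ j hr]

lemma poly_ray_eq (g : Polynomial ℂ) (ω τ : ℂ) :
    (fun r : ℝ => g.eval ((r:ℂ)*ω) * wexp τ ((r:ℂ)*ω))
      = fun r : ℝ => ∑ i ∈ Finset.range (g.natDegree+1),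
          g.coeff i * (((r:ℂ)*ω)^i * wexp τ ((r:ℂ)*ω)) := by
  funext r
  rw [Polynomial.eval_eq_sum_range, Finset.sum_mul]
  congr 1; funext i; ring

lemma integrable_poly_ray {ω : ℂ} (hω : ω^3 = -1) (τ : ℂ) (g : Polynomial ℂ) :
    IntegrableOn (fun r : ℝ => g.eval ((r:ℂ)*ω) * wexp τ ((r:ℂ)*ω)) (Ioi 0) := by
  rw [poly_ray_eq]
  exact integrable_finset_sum _ (fun i _ => (integrable_mono_ray hω τ i).const_mul _)

lemma tendsto_poly_ray {ω : ℂ} (hω : ω^3 = -1) (τ : ℂ) (g : Polynomial ℂ) :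
    Tendsto (fun r : ℝ => g.eval ((r:ℂ)*ω) * wexp τ ((r:ℂ)*ω)) atTop (𝓝 0) := by
  rw [poly_ray_eq]
  have : (0:ℂ) = ∑ i ∈ Finset.range (g.natDegree+1), (0:ℂ) := by simp
  rw [this]
  exact tendsto_finset_sum _ (fun i _ => by
    simpa using ((tendsto_mono_ray hω τ i).const_mul (g.coeff i)))
noncomputable def Dop (τ : ℂ) (s : Polynomial ℂ) : Polynomial ℂ :=
  Polynomial.derivative s + (2*Polynomial.X^2 + Polynomial.C τ) * s

lemma hasDerivAt_poly_wexp (τ : ℂ) (G : Polynomial ℂ) (z : ℂ) :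
    HasDerivAt (fun z => G.eval z * wexp τ z) ((Dop τ G).eval z * wexp τ z) z := by
  have h1 : HasDerivAt (fun z : ℂ => G.eval z) (G.derivative.eval z) z := G.hasDerivAt z
  have h2 : HasDerivAt (fun z : ℂ => 2*z^3/3 + τ*z) (2*z^2 + τ) z := by
    have ha : HasDerivAt (fun z : ℂ => 2*z^3/3) (2*z^2) z := by
      have h := (hasDerivAt_pow 3 z).const_mul ((2:ℂ)/3)
      have e1 : (fun z : ℂ => 2*z^3/3) = fun y => 2/3*y^3 := by funext y; ring
      have e2 : (2/3:ℂ) * (((3:ℕ):ℂ) * z^(3-1)) = 2*z^2 := by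
        simp only [Nat.cast_ofNat, show (3:ℕ) - 1 = 2 from rfl]; ring
      rw [e1]; exact h.congr_deriv e2
    have hb : HasDerivAt (fun z : ℂ => τ*z) τ z := by
      simpa using (hasDerivAt_id z).const_mul τ
    exact ha.add hb
  have h3 : HasDerivAt (fun z : ℂ => wexp τ z) (wexp τ z * (2*z^2 + τ)) z := by
    have := h2.cexp
    simpa [wexp] using this
  have := h1.mul h3
  refine this.congr_deriv ?_
  simp [Dop, Polynomial.eval_add, Polynomial.eval_mul]
  ring

lemma ray_ftc {ω : ℂ} (hω : ω^3 = -1) (τ : ℂ) (G : Polynomial ℂ) :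
    ω * ∫ r in Ioi (0:ℝ), (Dop τ G).eval ((r:ℂ)*ω) * wexp τ ((r:ℂ)*ω) = - G.eval 0 := by
  set f : ℝ → ℂ := fun r => G.eval ((r:ℂ)*ω) * wexp τ ((r:ℂ)*ω) with hf
  have hderiv : ∀ r : ℝ, HasDerivAt f (ω * ((Dop τ G).eval ((r:ℂ)*ω) * wexp τ ((r:ℂ)*ω))) r := by
    intro r
    have hF : HasDerivAt (fun z : ℂ => G.eval (z*ω) * wexp τ (z*ω))
        ((Dop τ G).eval (((r:ℝ):ℂ)*ω) * wexp τ (((r:ℝ):ℂ)*ω) * ω) ((r:ℝ):ℂ) := by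
      exact HasDerivAt.comp _ (hasDerivAt_poly_wexp τ G _) (hasDerivAt_mul_const ω)
    have := hF.comp_ofReal
    convert this using 1
    ring
  have hint : IntegrableOn
      (fun r : ℝ => ω * ((Dop τ G).eval ((r:ℂ)*ω) * wexp τ ((r:ℂ)*ω))) (Ioi 0) :=
    (integrable_poly_ray hω τ (Dop τ G)).const_mul ω
  have htend : Tendsto f atTop (𝓝 0) := tendsto_poly_ray hω τ G
  have := integral_Ioi_of_hasDerivAt_of_tendsto' (f := f)
    (fun r _ => hderiv r) hint htend
  rw [MeasureTheory.integral_const_mul] at this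
  rw [this]
  simp [hf, wexp]
lemma rayDir_cube {k : ℕ} (hk : Odd k) : rayDir k ^ 3 = -1 := by
  rw [rayDir, ← Complex.exp_nat_mul]
  have harg : ((3:ℕ):ℂ) * ((k:ℂ) * (Real.pi:ℂ) * Complex.I / 3) = (k:ℕ) * ((Real.pi:ℂ) * Complex.I) := by
    push_cast; ring
  rw [harg, Complex.exp_nat_mul, Complex.exp_pi_mul_I, hk.neg_one_pow]

lemma rayDir_one : rayDir 1 = 1/2 + ((Real.sqrt 3 / 2 : ℝ) : ℂ) * Complex.I := by
  rw [rayDir]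
  have harg : ((1:ℕ):ℂ) * (Real.pi:ℂ) * Complex.I / 3 = ((Real.pi/3 : ℝ) : ℂ) * Complex.I := by
    push_cast; ring
  rw [harg, Complex.exp_mul_I, ← Complex.ofReal_cos, ← Complex.ofReal_sin,
    Real.cos_pi_div_three, Real.sin_pi_div_three]
  norm_num

lemma rayDir_three : rayDir 3 = -1 := by
  rw [rayDir]
  have harg : ((3:ℕ):ℂ) * (Real.pi:ℂ) * Complex.I / 3 = (Real.pi:ℂ) * Complex.I := by
    push_cast; ring
  rw [harg, Complex.exp_pi_mul_I]

lemma rayDir_five : rayDir 5 = 1/2 - ((Real.sqrt 3 / 2 : ℝ) : ℂ) * Complex.I := by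
  rw [rayDir]
  have harg : ((5:ℕ):ℂ) * (Real.pi:ℂ) * Complex.I / 3
      = 2 * (Real.pi:ℂ) * Complex.I + ((-(Real.pi/3) : ℝ) : ℂ) * Complex.I := by
    push_cast; ring
  rw [harg, Complex.exp_add, Complex.exp_two_pi_mul_I, one_mul, Complex.exp_mul_I,
    ← Complex.ofReal_cos, ← Complex.ofReal_sin, Real.cos_neg, Real.sin_neg,
    Real.cos_pi_div_three, Real.sin_pi_div_three]
  push_cast
  ring
noncomputable def mom (k j : ℕ) (τ : ℂ) : ℂ := rayIntegral k (fun x => x^j * wexp τ x)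

lemma mom_def (k j : ℕ) (τ : ℂ) :
    mom k j τ = rayDir k * ∫ r in Ioi (0:ℝ), ((r:ℂ) * rayDir k)^j * wexp τ ((r:ℂ) * rayDir k) :=
  rfl

lemma mom_hasDerivAt {k : ℕ} (hk : Odd k) (j : ℕ) (τ : ℂ) :
    HasDerivAt (mom k j) (mom k (j+1) τ) τ := by
  set ω := rayDir k with hωdef
  have hω : ω^3 = -1 := rayDir_cube hk
  have key := hasDerivAt_integral_of_dominated_loc_of_deriv_le
    (F := fun (τ' : ℂ) (r : ℝ) => ((r:ℂ)*ω)^j * wexp τ' ((r:ℂ)*ω))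
    (F' := fun (τ' : ℂ) (r : ℝ) => ((r:ℂ)*ω)^(j+1) * wexp τ' ((r:ℂ)*ω))
    (μ := volume.restrict (Ioi 0)) (x₀ := τ)
    (bound := fun r : ℝ => r^(j+1) * Real.exp (-(2/3)*r^3 + (‖τ‖+1)*r))
    (s := Metric.ball τ 1) (Metric.ball_mem_nhds τ one_pos) ?_ ?_ ?_ ?_ ?_ ?_
  · have h := key.2
    have h1 : ∀ j : ℕ, mom k j = fun τ' => ω * ∫ r in Ioi (0:ℝ), ((r:ℂ)*ω)^j * wexp τ' ((r:ℂ)*ω) := by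
      intro j; funext τ'; rfl
    rw [h1 j, h1 (j+1)]
    exact h.const_mul ω
  · filter_upwards with τ'
    apply Continuous.aestronglyMeasurable
    unfold wexp; continuity
  · exact integrable_mono_ray hω τ j
  · apply Continuous.aestronglyMeasurable
    unfold wexp; continuity
  · filter_upwards [ae_restrict_mem measurableSet_Ioi] with r hr τ' hτ'
    rw [norm_ray_integrand hω τ' (j+1) (le_of_lt hr)]
    have hb : (τ'*ω).re ≤ ‖τ‖ + 1 := by
      calc (τ'*ω).re ≤ ‖τ'*ω‖ := Complex.re_le_norm _
        _ = ‖τ'‖ * ‖ω‖ := by rw [norm_mul]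
        _ = ‖τ'‖ := by rw [norm_omega hω, mul_one]
        _ ≤ ‖τ‖ + 1 := by
            have := mem_ball_iff_norm.mp hτ'
            calc ‖τ'‖ = ‖τ + (τ' - τ)‖ := by ring_nf
              _ ≤ ‖τ‖ + ‖τ' - τ‖ := norm_add_le _ _
              _ ≤ ‖τ‖ + 1 := by
                  have : ‖τ' - τ‖ ≤ 1 := le_of_lt this
                  linarith
    have h1 : -(2/3)*r^3 + (τ'*ω).re * r ≤ -(2/3)*r^3 + (‖τ‖+1)*r := by
      have hr0 : (0:ℝ) ≤ r := le_of_lt hr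
      nlinarith
    have h2 := Real.exp_le_exp.2 h1
    have hrj : (0:ℝ) ≤ r^(j+1) := pow_nonneg (le_of_lt hr) _
    exact mul_le_mul_of_nonneg_left h2 hrj
  · exact integrable_aux (j+1) (‖τ‖+1)
  · filter_upwards [ae_restrict_mem measurableSet_Ioi] with r hr τ' hτ'
    have hin : HasDerivAt (fun τ'' : ℂ => 2*((r:ℂ)*ω)^3/3 + τ''*((r:ℂ)*ω)) ((r:ℂ)*ω) τ' := by
      simpa using (hasDerivAt_mul_const ((r:ℂ)*ω)).const_add (2*((r:ℂ)*ω)^3/3)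
    have := (hin.cexp).const_mul (((r:ℂ)*ω)^j)
    refine this.congr_deriv ?_
    unfold wexp
    ring
noncomputable def creal (j : ℕ) : ℝ := ∫ r in Ioi (0:ℝ), r^j * Real.exp (-(2/3)*r^3)

lemma creal_pos (j : ℕ) : 0 < creal j := by
  rw [creal, setIntegral_pos_iff_support_of_nonneg_ae]
  · have : (Function.support fun r : ℝ => r^j * Real.exp (-(2/3)*r^3)) ∩ Ioi 0 = Ioi 0 := by
      apply inter_eq_right.mpr
      intro r hr
      have : r^j * Real.exp (-(2/3)*r^3) ≠ 0 := by
        have h1 : r ≠ 0 := ne_of_gt hr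
        positivity
      exact this
    rw [this]
    simp
  · filter_upwards [ae_restrict_mem measurableSet_Ioi] with r hr
    have : (0:ℝ) < r := hr
    positivity
  · have := integrable_aux j 0
    simpa using this

lemma mom_zero {k : ℕ} (hk : Odd k) (j : ℕ) :
    mom k j 0 = rayDir k ^ (j+1) * (creal j : ℂ) := by
  have hω : (rayDir k)^3 = -1 := rayDir_cube hk
  rw [mom_def]
  have hint : (fun r : ℝ => ((r:ℂ) * rayDir k)^j * wexp 0 ((r:ℂ) * rayDir k))
      = fun r : ℝ => rayDir k ^ j * ((r^j * Real.exp (-(2/3)*r^3) : ℝ) : ℂ) := by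
    funext r
    have harg : 2*((r:ℂ)*rayDir k)^3/3 + 0*((r:ℂ)*rayDir k) = ((-(2/3)*r^3 : ℝ) : ℂ) := by
      have := wexp_arg hω 0 r
      simpa using this
    rw [wexp, harg, ← Complex.ofReal_exp]
    push_cast
    ring
  rw [hint, MeasureTheory.integral_const_mul]
  have hco : ∫ (a:ℝ) in Ioi 0, ((a ^ j * Real.exp (-(2/3)*a^3) : ℝ) : ℂ) = ((creal j : ℝ) : ℂ) := by
    rw [creal]; exact integral_ofReal
  rw [hco]
  ring

lemma momODE {k : ℕ} (hk : Odd k) (τ : ℂ) :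
    2 * mom k 2 τ + τ * mom k 0 τ = -1 := by
  have hω : (rayDir k)^3 = -1 := rayDir_cube hk
  have h := ray_ftc hω τ (1 : Polynomial ℂ)
  have hD : (Dop τ (1 : Polynomial ℂ)) = 2*Polynomial.X^2 + Polynomial.C τ := by
    simp [Dop]
  rw [hD] at h
  set ω := rayDir k
  have hsplit : (fun r : ℝ => (2*Polynomial.X^2 + Polynomial.C τ : Polynomial ℂ).eval ((r:ℂ)*ω) * wexp τ ((r:ℂ)*ω))
      = fun r : ℝ => 2 * (((r:ℂ)*ω)^2 * wexp τ ((r:ℂ)*ω)) + τ * (((r:ℂ)*ω)^0 * wexp τ ((r:ℂ)*ω)) := by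
    funext r; simp; ring
  rw [hsplit] at h
  rw [MeasureTheory.integral_add ((integrable_mono_ray hω τ 2).const_mul 2)
    ((integrable_mono_ray hω τ 0).const_mul τ),
    MeasureTheory.integral_const_mul, MeasureTheory.integral_const_mul] at h
  simp only [Polynomial.eval_one] at h
  have h0 : mom k 0 τ = ω * ∫ r in Ioi (0:ℝ), ((r:ℂ)*ω)^0 * wexp τ ((r:ℂ)*ω) := rfl
  have h2 : mom k 2 τ = ω * ∫ r in Ioi (0:ℝ), ((r:ℂ)*ω)^2 * wexp τ ((r:ℂ)*ω) := rfl
  rw [h0, h2]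
  linear_combination h
noncomputable def Af (j : ℕ) (τ : ℂ) : ℂ := mom 3 j τ - mom 1 j τ
noncomputable def Bf (j : ℕ) (τ : ℂ) : ℂ := mom 3 j τ - mom 5 j τ
noncomputable def Wro (τ : ℂ) : ℂ := Af 0 τ * Bf 1 τ - Af 1 τ * Bf 0 τ

lemma odd1 : Odd 1 := by decide
lemma odd3 : Odd 3 := by decide
lemma odd5 : Odd 5 := by decide

lemma Af_hasDerivAt (j : ℕ) (τ : ℂ) : HasDerivAt (Af j) (Af (j+1) τ) τ :=
  (mom_hasDerivAt odd3 j τ).sub (mom_hasDerivAt odd1 j τ)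

lemma Bf_hasDerivAt (j : ℕ) (τ : ℂ) : HasDerivAt (Bf j) (Bf (j+1) τ) τ :=
  (mom_hasDerivAt odd3 j τ).sub (mom_hasDerivAt odd5 j τ)

lemma AfODE (τ : ℂ) : 2 * Af 2 τ = -τ * Af 0 τ := by
  have h3 := momODE odd3 τ
  have h1 := momODE odd1 τ
  rw [Af, Af]
  linear_combination h3 - h1

lemma BfODE (τ : ℂ) : 2 * Bf 2 τ = -τ * Bf 0 τ := by
  have h3 := momODE odd3 τ
  have h5 := momODE odd5 τ
  rw [Bf, Bf]
  linear_combination h3 - h5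

lemma Wro_hasDerivAt (τ : ℂ) : HasDerivAt Wro 0 τ := by
  have h := ((Af_hasDerivAt 0 τ).mul (Bf_hasDerivAt 1 τ)).sub
    ((Af_hasDerivAt 1 τ).mul (Bf_hasDerivAt 0 τ))
  have heq : Af 1 τ * Bf 1 τ + Af 0 τ * Bf 2 τ - (Af 2 τ * Bf 0 τ + Af 1 τ * Bf 1 τ) = 0 := by
    have hA := AfODE τ
    have hB := BfODE τ
    linear_combination (Af 0 τ / 2) * hB - (Bf 0 τ / 2) * hA
  rw [heq] at h
  exact h

lemma Wro_const (τ : ℂ) : Wro τ = Wro 0 :=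
  is_const_of_deriv_eq_zero (𝕜 := ℂ)
    (fun z => (Wro_hasDerivAt z).differentiableAt)
    (fun z => (Wro_hasDerivAt z).deriv) τ 0

lemma Wro_ne_zero (τ : ℂ) : Wro τ ≠ 0 := by
  rw [Wro_const τ]
  have hA0 : Af 0 0 = (rayDir 3 - rayDir 1) * (creal 0 : ℂ) := by
    rw [Af, mom_zero odd3, mom_zero odd1]; ring
  have hA1 : Af 1 0 = (rayDir 3^2 - rayDir 1^2) * (creal 1 : ℂ) := by
    rw [Af, mom_zero odd3, mom_zero odd1]; ring
  have hB0 : Bf 0 0 = (rayDir 3 - rayDir 5) * (creal 0 : ℂ) := by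
    rw [Bf, mom_zero odd3, mom_zero odd5]; ring
  have hB1 : Bf 1 0 = (rayDir 3^2 - rayDir 5^2) * (creal 1 : ℂ) := by
    rw [Bf, mom_zero odd3, mom_zero odd5]; ring
  rw [Wro, hA0, hA1, hB0, hB1]
  set u : ℂ := ((Real.sqrt 3 / 2 : ℝ) : ℂ) with hu
  have hu2 : u^2 = 3/4 := by
    have : ((Real.sqrt 3 / 2 : ℝ))^2 = 3/4 := by
      rw [div_pow, Real.sq_sqrt (by norm_num : (0:ℝ) ≤ 3)]
      norm_num
    rw [hu, ← Complex.ofReal_pow, this]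
    norm_num
  have hE : (rayDir 3 - rayDir 1) * (rayDir 3^2 - rayDir 5^2)
      - (rayDir 3^2 - rayDir 1^2) * (rayDir 3 - rayDir 5) = -6*u*Complex.I := by
    rw [rayDir_one, rayDir_three, rayDir_five, ← hu]
    linear_combination (2*u^3*Complex.I) * Complex.I_sq + (-2*u*Complex.I) * hu2
  have : (rayDir 3 - rayDir 1) * (creal 0 : ℂ) * ((rayDir 3^2 - rayDir 5^2) * (creal 1 : ℂ))
      - (rayDir 3^2 - rayDir 1^2) * (creal 1 : ℂ) * ((rayDir 3 - rayDir 5) * (creal 0 : ℂ))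
      = (-6*u*Complex.I) * ((creal 0 : ℂ) * (creal 1 : ℂ)) := by
    rw [← hE]; ring
  rw [this]
  apply mul_ne_zero
  · apply mul_ne_zero (mul_ne_zero (by norm_num) ?_) Complex.I_ne_zero
    rw [hu]
    simp only [ne_eq, Complex.ofReal_eq_zero]
    positivity
  · apply mul_ne_zero <;>
    · simp only [ne_eq, Complex.ofReal_eq_zero]
      exact ne_of_gt (creal_pos _)
section Alg
open Polynomial

lemma Dop_expand (τ : ℂ) (s : Polynomial ℂ) :
    Dop τ s = derivative s + C 2 * (X^2 * s) + C τ * s := by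
  have h2 : (C (2:ℂ)) = (2:Polynomial ℂ) := map_ofNat C 2
  rw [Dop, h2]; ring

lemma Dop_coeff_top (τ : ℂ) (s : Polynomial ℂ) :
    (Dop τ s).coeff (s.natDegree + 2) = 2 * s.leadingCoeff := by
  rw [Dop_expand, coeff_add, coeff_add, coeff_C_mul, coeff_C_mul, coeff_X_pow_mul]
  have h1 : (derivative s).coeff (s.natDegree + 2) = 0 := by
    apply coeff_eq_zero_of_natDegree_lt
    exact lt_of_le_of_lt (natDegree_derivative_le s) (by omega)
  have h2 : s.coeff (s.natDegree + 2) = 0 :=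
    coeff_eq_zero_of_natDegree_lt (by omega)
  rw [h1, h2, leadingCoeff]
  ring

lemma Dop_natDegree_le (τ : ℂ) (s : Polynomial ℂ) :
    (Dop τ s).natDegree ≤ s.natDegree + 2 := by
  rw [Dop_expand]
  apply le_trans (natDegree_add_le _ _)
  apply max_le
  · apply le_trans (natDegree_add_le _ _)
    apply max_le
    · exact le_trans (natDegree_derivative_le s) (by omega)
    · apply le_trans (natDegree_C_mul_le _ _)
      apply le_trans (natDegree_mul_le)
      simp [natDegree_X_pow]
      omega
  · exact le_trans (natDegree_C_mul_le _ _) (by omega)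

lemma Dop_ne_zero (τ : ℂ) {s : Polynomial ℂ} (hs : s ≠ 0) : Dop τ s ≠ 0 := by
  intro h
  have := Dop_coeff_top τ s
  rw [h, coeff_zero] at this
  have hlc : s.leadingCoeff ≠ 0 := leadingCoeff_ne_zero.mpr hs
  exact hlc (by linear_combination -this/2)

lemma Dop_natDegree (τ : ℂ) {s : Polynomial ℂ} (hs : s ≠ 0) :
    (Dop τ s).natDegree = s.natDegree + 2 := by
  apply le_antisymm (Dop_natDegree_le τ s)
  apply le_natDegree_of_ne_zero
  rw [Dop_coeff_top]
  exact mul_ne_zero two_ne_zero (leadingCoeff_ne_zero.mpr hs)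

lemma Dop_leibniz (τ : ℂ) (f s : Polynomial ℂ) :
    Dop τ (f * s) = derivative f * s + f * Dop τ s := by
  rw [Dop, Dop, derivative_mul]; ring

/-- Key algebraic impossibility: for q ≠ 0 it cannot be that all x^i q, i ≤ deg q,
are in the image of `Dop τ`. -/
lemma alg_impossible (τ : ℂ) :
    ∀ d : ℕ, ∀ q : Polynomial ℂ, q ≠ 0 → q.natDegree ≤ d →
      (∀ i ≤ q.natDegree, ∃ s, X^i * q = Dop τ s) → False := by
  intro d
  induction d using Nat.strong_induction_on with
  | _ d ih =>
    intro q hq hqd hmem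
    obtain ⟨s₀, hs₀⟩ := hmem 0 (Nat.zero_le _)
    rw [pow_zero, one_mul] at hs₀
    have hs₀ne : s₀ ≠ 0 := by
      rintro rfl
      apply hq
      rw [hs₀]; simp [Dop]
    have hdeg : q.natDegree = s₀.natDegree + 2 := by
      rw [hs₀, Dop_natDegree τ hs₀ne]
    -- now show all x^m s₀, m ≤ natDegree s₀, lie in image of Dop
    have hmem' : ∀ m ≤ s₀.natDegree, ∃ s, X^m * s₀ = Dop τ s := by
      intro m hm
      obtain ⟨sm, hsm⟩ := hmem (m+1) (by omega)
      refine ⟨C (-(1:ℂ)/(m+1)) * (sm - X^(m+1) * s₀), ?_⟩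
      have hder : derivative (X^(m+1) : Polynomial ℂ) = C ((m:ℂ)+1) * X^m := by
        rw [derivative_X_pow]
        push_cast
        simp
      have hD : Dop τ (X^(m+1) * s₀) = C ((m:ℂ)+1) * X^m * s₀ + X^(m+1) * Dop τ s₀ := by
        rw [Dop_leibniz, hder]
      have key : Dop τ (sm - X^(m+1) * s₀) = - (C ((m:ℂ)+1) * (X^m * s₀)) := by
        have hsub : Dop τ (sm - X^(m+1) * s₀) = Dop τ sm - Dop τ (X^(m+1) * s₀) := by
          rw [Dop, Dop, Dop, derivative_sub]; ring
        rw [hsub, ← hsm, hD, ← hs₀]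
        ring
      have hCmul : Dop τ (C (-(1:ℂ)/(m+1)) * (sm - X^(m+1) * s₀))
          = C (-(1:ℂ)/(m+1)) * Dop τ (sm - X^(m+1) * s₀) := by
        rw [Dop, Dop, derivative_C_mul]; ring
      rw [hCmul, key]
      have hm1 : ((m:ℂ)+1) ≠ 0 := by
        simpa using Nat.cast_add_one_ne_zero (R := ℂ) m
      have hc : C (-(1:ℂ)/((m:ℂ)+1)) * -(C ((m:ℂ)+1)) = 1 := by
        rw [← C_neg, ← C_mul, show (-(1:ℂ)/((m:ℂ)+1)) * -((m:ℂ)+1) = 1 from by field_simp, C_1]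
      linear_combination (-(X^m*s₀)) * hc
    have hlt : s₀.natDegree < d := by omega
    exact ih s₀.natDegree hlt s₀ hs₀ne le_rfl hmem'
lemma Dop_add (τ : ℂ) (s s' : Polynomial ℂ) : Dop τ (s + s') = Dop τ s + Dop τ s' := by
  rw [Dop, Dop, Dop, derivative_add]; ring

lemma Dop_C_mul (τ : ℂ) (c : ℂ) (s : Polynomial ℂ) : Dop τ (C c * s) = C c * Dop τ s := by
  rw [Dop, Dop, derivative_C_mul]; ring

/-- every polynomial is (image of Dop) + a + b·X -/
lemma surj_D (τ : ℂ) : ∀ d : ℕ, ∀ g : Polynomial ℂ, g.natDegree ≤ d →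
    ∃ s a b, g = Dop τ s + C a + C b * X := by
  intro d
  induction d using Nat.strong_induction_on with
  | _ d ih =>
    intro g hgd
    by_cases h1 : g.natDegree ≤ 1
    · refine ⟨0, g.coeff 0, g.coeff 1, ?_⟩
      have := eq_X_add_C_of_natDegree_le_one h1
      rw [this]
      simp [Dop]
      ring
    · push_neg at h1
      set D := g.natDegree with hD
      have hD2 : 2 ≤ D := h1
      set e := g.coeff D / 2 with he
      set g' := g - C e * Dop τ (X^(D-2)) with hg'
      have hXdeg : (X^(D-2) : Polynomial ℂ).natDegree = D - 2 := natDegree_X_pow _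
      have hXlc : (X^(D-2) : Polynomial ℂ).leadingCoeff = 1 := by
        simp [leadingCoeff, hXdeg]
      have hDcoeff : (Dop τ (X^(D-2) : Polynomial ℂ)).coeff D = 2 := by
        have := Dop_coeff_top τ (X^(D-2) : Polynomial ℂ)
        rw [hXdeg, hXlc] at this
        rw [show D - 2 + 2 = D by omega] at this
        rw [this]; ring
      have hDnd : (Dop τ (X^(D-2) : Polynomial ℂ)).natDegree ≤ D := by
        have := Dop_natDegree_le τ (X^(D-2) : Polynomial ℂ)
        rw [hXdeg] at this
        omega
      have hg'deg : g'.natDegree ≤ D - 1 := by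
        rw [natDegree_le_iff_coeff_eq_zero]
        intro N hN
        rw [hg', coeff_sub, coeff_C_mul]
        rcases eq_or_lt_of_le (show D ≤ N by omega) with rfl|hNg
        · rw [hDcoeff, he]
          field_simp
          rw [sub_self, mul_zero]
        · rw [coeff_eq_zero_of_natDegree_lt (by omega),
            coeff_eq_zero_of_natDegree_lt (by omega : (Dop τ (X^(D-2) : Polynomial ℂ)).natDegree < N)]
          ring
      obtain ⟨s, a, b, hs⟩ := ih (D-1) (by omega) g' hg'deg
      refine ⟨s + C e * X^(D-2), a, b, ?_⟩
      rw [Dop_add, Dop_C_mul]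
      have : g = g' + C e * Dop τ (X^(D-2)) := by rw [hg']; ring
      rw [this, hs]
      ring
noncomputable def Topq (t lam : ℂ) (n : ℕ) (q : Polynomial ℂ) : Polynomial ℂ :=
  derivative (derivative q) + (2*X^2 + C t) * derivative q
    - C (2*(n:ℂ)) * X * q - C lam * q

lemma Topq_add (t lam : ℂ) (n : ℕ) (q q' : Polynomial ℂ) :
    Topq t lam n (q + q') = Topq t lam n q + Topq t lam n q' := by
  rw [Topq, Topq, Topq, derivative_add, derivative_add]; ring

lemma Topq_C_mul (t lam : ℂ) (n : ℕ) (c : ℂ) (q : Polynomial ℂ) :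
    Topq t lam n (C c * q) = C c * Topq t lam n q := by
  rw [Topq, Topq, derivative_C_mul, derivative_C_mul]; ring

lemma Topq_zero (t lam : ℂ) (n : ℕ) : Topq t lam n 0 = 0 := by
  simp [Topq]

lemma Topq_X_zero (t lam : ℂ) (n : ℕ) :
    Topq t lam n (X^0) = - (C (2*(n:ℂ)) * X) - C lam := by
  simp [Topq]

lemma Topq_X_succ (t lam : ℂ) (n : ℕ) (e : ℕ) :
    Topq t lam n (X^(e+1)) = C ((e:ℂ)+1) * C (e:ℂ) * X^(e-1) + C ((e:ℂ)+1) * C t * X^e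
      + C ((e:ℂ)+1) * C 2 * X^(e+2) - C (2*(n:ℂ)) * X^(e+2) - C lam * X^(e+1) := by
  have h1 : derivative (X^(e+1) : Polynomial ℂ) = C ((e:ℂ)+1) * X^e := by
    rw [derivative_X_pow]
    push_cast
    simp
  have h2 : derivative (C ((e:ℂ)+1) * X^e : Polynomial ℂ) = C ((e:ℂ)+1) * (C (e:ℂ) * X^(e-1)) := by
    rw [derivative_C_mul, derivative_X_pow]
  have h3 : (C (2:ℂ)) = (2:Polynomial ℂ) := map_ofNat C 2
  rw [Topq, h1, h2, ← h3]
  rw [show (X^(e+2) : Polynomial ℂ) = X^2 * X^e by rw [← pow_add]; ring_nf,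
    show (X^(e+1) : Polynomial ℂ) = X * X^e by rw [← pow_succ']]
  ring

lemma Topq_coeff (t lam : ℂ) (n : ℕ) (d : ℕ) :
    (Topq t lam n (X^d)).coeff (d+1) = 2*((d:ℂ) - (n:ℂ)) := by
  cases d with
  | zero =>
      rw [Topq_X_zero]
      simp
  | succ e =>
      rw [Topq_X_succ]
      simp only [coeff_add, coeff_sub, coeff_C_mul, coeff_X_pow, mul_assoc]
      rw [if_neg (show ¬(e+1+1 = e-1) by omega), if_neg (show ¬(e+1+1 = e) by omega),
        if_neg (show ¬(e+1+1 = e+1) by omega)]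
      norm_num
      push_cast
      ring

lemma Topq_natDegree_le (t lam : ℂ) (n : ℕ) (d : ℕ) :
    (Topq t lam n (X^d)).natDegree ≤ d+1 := by
  cases d with
  | zero =>
      rw [Topq_X_zero]
      compute_degree
  | succ e =>
      rw [Topq_X_succ]
      compute_degree <;> omega

lemma red (t lam : ℂ) (n : ℕ) : ∀ d : ℕ, d ≤ n → ∀ g : Polynomial ℂ, g.natDegree ≤ d →
    ∃ q c, g = Topq t lam n q + C c := by
  intro d
  induction d with
  | zero =>
      intro _ g hg
      exact ⟨0, g.coeff 0, by rw [Topq_zero, zero_add, ← eq_C_of_natDegree_le_zero hg]⟩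
  | succ d ih =>
      intro hdn g hg
      have hne : 2*((d:ℂ) - (n:ℂ)) ≠ 0 := by
        have hdln : d < n := by omega
        have h0 : (d:ℂ) ≠ (n:ℂ) := by
          intro h
          exact absurd (Nat.cast_injective h) (by omega)
        intro h
        apply h0
        have h2 : ((d:ℂ) - (n:ℂ)) = 0 := by linear_combination h/2
        linear_combination h2
      set e := g.coeff (d+1) / (2*((d:ℂ) - (n:ℂ))) with he
      set g' := g - C e * Topq t lam n (X^d) with hg'
      have hg'deg : g'.natDegree ≤ d := by
        rw [natDegree_le_iff_coeff_eq_zero]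
        intro N hN
        rw [hg', coeff_sub, coeff_C_mul]
        rcases eq_or_lt_of_le (show d+1 ≤ N by omega) with rfl|hNg
        · rw [Topq_coeff, he]
          field_simp
          rw [div_self (sub_ne_zero.mpr fun h => hne (by rw [h]; ring)), sub_self, mul_zero]
        · rw [coeff_eq_zero_of_natDegree_lt (show g.natDegree < N by omega),
            coeff_eq_zero_of_natDegree_lt
              (lt_of_le_of_lt (Topq_natDegree_le t lam n d) (show d+1 < N by omega))]
          ring
      obtain ⟨q, c, hqc⟩ := ih (by omega) g' hg'deg
      refine ⟨q + C e * X^d, c, ?_⟩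
      rw [Topq_add, Topq_C_mul]
      have hsplit : g = g' + C e * Topq t lam n (X^d) := by rw [hg']; ring
      rw [hsplit, hqc]
      ring
noncomputable def NF (t : ℂ) (k : ℕ) (g : Polynomial ℂ) : ℂ :=
  rayDir k * ∫ r in Ioi (0:ℝ), g.eval ((r:ℂ)*rayDir k) * wexp t ((r:ℂ)*rayDir k)

lemma NF_D (t : ℂ) {k : ℕ} (hk : Odd k) (s : Polynomial ℂ) :
    NF t k (Dop t s) = - s.eval 0 :=
  ray_ftc (rayDir_cube hk) t s

lemma NF_add (t : ℂ) {k : ℕ} (hk : Odd k) (g h : Polynomial ℂ) :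
    NF t k (g + h) = NF t k g + NF t k h := by
  rw [NF, NF, NF]
  have : (fun r : ℝ => (g+h).eval ((r:ℂ)*rayDir k) * wexp t ((r:ℂ)*rayDir k))
      = fun r : ℝ => g.eval ((r:ℂ)*rayDir k) * wexp t ((r:ℂ)*rayDir k)
        + h.eval ((r:ℂ)*rayDir k) * wexp t ((r:ℂ)*rayDir k) := by
    funext r; rw [eval_add]; ring
  rw [this, MeasureTheory.integral_add (integrable_poly_ray (rayDir_cube hk) t g)
    (integrable_poly_ray (rayDir_cube hk) t h)]
  ring

lemma NF_C_mul (t : ℂ) (k : ℕ) (c : ℂ) (g : Polynomial ℂ) :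
    NF t k (C c * g) = c * NF t k g := by
  rw [NF, NF]
  have : (fun r : ℝ => (C c * g).eval ((r:ℂ)*rayDir k) * wexp t ((r:ℂ)*rayDir k))
      = fun r : ℝ => c * (g.eval ((r:ℂ)*rayDir k) * wexp t ((r:ℂ)*rayDir k)) := by
    funext r; rw [eval_mul, eval_C]; ring
  rw [this, MeasureTheory.integral_const_mul]
  ring

lemma NF_mom (t : ℂ) (k : ℕ) (j : ℕ) : NF t k (X^j) = mom k j t := by
  rw [NF, mom_def]
  have h : (fun r : ℝ => (X^j : Polynomial ℂ).eval ((r:ℂ)*rayDir k) * wexp t ((r:ℂ)*rayDir k))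
      = fun r : ℝ => ((r:ℂ)*rayDir k)^j * wexp t ((r:ℂ)*rayDir k) := by
    funext r; simp
  rw [h]


/-- if the ray integrals of F² = (p·e^θ)² are all equal (both
wedge-contour integrals of F² vanish), then λ is a repeated eigenvalue: there is a
polynomial generalized eigenvector r. -/
theorem vanishing_integrals_give_repeated_eigenvalue
    (n : ℕ) (t lam : ℂ) (p : Polynomial ℂ) (hmonic : p.Monic) (hdeg : p.natDegree = n)
    (heq : ∀ x : ℂ, (p.derivative.derivative).eval x
        + (2 * x ^ 2 + t) * p.derivative.eval x
        - 2 * (n : ℂ) * x * p.eval x = lam * p.eval x)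
    (h13 : rayIntegral 1 (fun x => (p.eval x * Complex.exp (x ^ 3 / 3 + t * x / 2)) ^ 2)
      = rayIntegral 3 (fun x => (p.eval x * Complex.exp (x ^ 3 / 3 + t * x / 2)) ^ 2))
    (h35 : rayIntegral 3 (fun x => (p.eval x * Complex.exp (x ^ 3 / 3 + t * x / 2)) ^ 2)
      = rayIntegral 5 (fun x => (p.eval x * Complex.exp (x ^ 3 / 3 + t * x / 2)) ^ 2)) :
    ∃ r : Polynomial ℂ, ∀ x : ℂ, (r.derivative.derivative).eval x
        + (2 * x ^ 2 + t) * r.derivative.eval x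
        - 2 * (n : ℂ) * x * r.eval x - lam * r.eval x = p.eval x := by
  -- polynomial form of the eigen-equation
  have hTp : Topq t lam n p = 0 := by
    apply Polynomial.funext
    intro x
    simp only [Topq, eval_add, eval_sub, eval_mul, eval_C, eval_X, eval_pow,
      eval_ofNat, eval_zero]
    linear_combination heq x
  obtain ⟨q₀, c₀, hq₀⟩ := red t lam n n le_rfl p (le_of_eq hdeg)
  by_cases hc₀ : c₀ = 0
  · refine ⟨q₀, fun x => ?_⟩
    rw [hq₀, hc₀]
    simp only [eval_add, eval_sub, eval_mul, eval_C, eval_X, eval_pow, eval_ofNat,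
      map_zero, add_zero, Topq]
  · exfalso
    -- the integrand rewrite : F² = (p·p)·wexp
    have hfun : (fun x : ℂ => (p.eval x * Complex.exp (x ^ 3 / 3 + t * x / 2)) ^ 2)
        = fun x : ℂ => (p*p).eval x * wexp t x := by
      funext x
      rw [eval_mul, wexp]
      rw [show ((p.eval x) * Complex.exp (x ^ 3 / 3 + t * x / 2)) ^ 2
          = (p.eval x * p.eval x) *
            (Complex.exp (x ^ 3 / 3 + t * x / 2) * Complex.exp (x ^ 3 / 3 + t * x / 2)) from by ring]
      rw [← Complex.exp_add]
      congr 2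
      ring
    rw [hfun] at h13 h35
    have hpp13 : NF t 1 (p*p) = NF t 3 (p*p) := h13
    have hpp35 : NF t 3 (p*p) = NF t 5 (p*p) := h35
    -- vanishing of NF differences on Topq q * p
    have hTD : ∀ q : Polynomial ℂ, Topq t lam n q * p
        = Dop t (derivative q * p - q * derivative p) := by
      intro q
      have hTp' := hTp
      rw [Topq] at hTp'
      rw [Topq, Dop, derivative_sub, derivative_mul, derivative_mul]
      linear_combination q * hTp'
    have hNT : ∀ (k : ℕ), Odd k → ∀ q : Polynomial ℂ,
        NF t k (Topq t lam n q * p) = - (derivative q * p - q * derivative p).eval 0 := by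
      intro k hk q
      rw [hTD q]
      exact NF_D t hk _
    -- vanishing on X^j * p for j ≤ n
    have hvanish : ∀ j : ℕ, j ≤ n →
        (NF t 3 (X^j * p) - NF t 1 (X^j * p) = 0)
          ∧ (NF t 3 (X^j * p) - NF t 5 (X^j * p) = 0) := by
      intro j hj
      obtain ⟨qj, cj, hqj⟩ := red t lam n n le_rfl (X^j)
        (by rw [natDegree_X_pow]; exact hj)
      have hXjp : X^j * p = Topq t lam n qj * p + (C (cj/c₀) * (p*p)
          + C (-(cj/c₀)) * (Topq t lam n q₀ * p)) := by
        have hC0 : (C c₀ : Polynomial ℂ) = p - Topq t lam n q₀ := by rw [hq₀]; ring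
        have hCc : (C cj : Polynomial ℂ) = C (cj/c₀) * C c₀ := by
          rw [← C_mul]
          congr 1
          field_simp
        calc X^j * p = (Topq t lam n qj + C cj) * p := by rw [← hqj]
          _ = Topq t lam n qj * p + (C (cj/c₀) * C c₀) * p := by rw [← hCc]; ring
          _ = _ := by rw [hC0, map_neg]; ring
      have hNX : ∀ (k : ℕ), Odd k → NF t k (X^j * p)
          = - (derivative qj * p - qj * derivative p).eval 0
            + ((cj/c₀) * NF t k (p*p)
              + (-(cj/c₀)) * (- (derivative q₀ * p - q₀ * derivative p).eval 0)) := by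
        intro k hk
        rw [hXjp, NF_add t hk, NF_add t hk, NF_C_mul, NF_C_mul, hNT k hk, hNT k hk]
      constructor
      · rw [hNX 3 odd3, hNX 1 odd1, hpp13]; ring
      · rw [hNX 3 odd3, hNX 5 odd5, hpp35]; ring
    -- each X^i * p is in the image of Dop t
    have hDmem : ∀ i ≤ p.natDegree, ∃ s, X^i * p = Dop t s := by
      intro i hi
      have hin : i ≤ n := by omega
      obtain ⟨s, a, b, hs⟩ := surj_D t (X^i*p).natDegree (X^i*p) le_rfl
      have hs' : X^i * p = Dop t s + (C a * X^0 + C b * X^1) := by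
        rw [hs]; simp; ring
      have hNXi : ∀ (k : ℕ), Odd k → NF t k (X^i*p)
          = - s.eval 0 + (a * mom k 0 t + b * mom k 1 t) := by
        intro k hk
        rw [hs', NF_add t hk, NF_add t hk, NF_C_mul, NF_C_mul, NF_D t hk,
          NF_mom, NF_mom]
      obtain ⟨hv1, hv2⟩ := hvanish i hin
      rw [hNXi 3 odd3, hNXi 1 odd1] at hv1
      rw [hNXi 3 odd3] at hv2
      rw [hNXi 5 odd5] at hv2
      have e1 : a * Af 0 t + b * Af 1 t = 0 := by
        rw [Af, Af]; linear_combination hv1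
      have e2 : a * Bf 0 t + b * Bf 1 t = 0 := by
        rw [Bf, Bf]; linear_combination hv2
      have hw : Af 0 t * Bf 1 t - Af 1 t * Bf 0 t ≠ 0 := by
        have := Wro_ne_zero t
        rw [Wro] at this
        exact this
      have ha : a = 0 := by
        have hz : a * (Af 0 t * Bf 1 t - Af 1 t * Bf 0 t) = 0 := by
          linear_combination (Bf 1 t) * e1 - (Af 1 t) * e2
        rcases mul_eq_zero.mp hz with h|h
        · exact h
        · exact absurd h hw
      have hb : b = 0 := by
        have hz : b * (Af 0 t * Bf 1 t - Af 1 t * Bf 0 t) = 0 := by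
          linear_combination (Af 0 t) * e2 - (Bf 0 t) * e1
        rcases mul_eq_zero.mp hz with h|h
        · exact h
        · exact absurd h hw
      refine ⟨s, ?_⟩
      rw [hs', ha, hb]
      simp
    exact alg_impossible t p.natDegree p hmonic.ne_zero le_rfl hDmem
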